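/- Let k ≥ 2 be an integer. Every polynomial vector field v = (v₁, v₂) with components of total degree at most k+1 can be written as v = τ x^⊥ + a + b x, where τ is a symmetric polynomial matrix with entries of total degree at most k, a ∈ ℝ² and b ∈ ℝ; moreover a and b are uniquely determined by v, namely a = v(0,0) and b = ½(div v)(0,0) with div v := ∂₁v₁ + ∂₂v₂. -/

import Mathlib

open MvPolynomial Matrix

/-- Real polynomials in two variables. -/
abbrev P2 := MvPolynomial (Fin 2) ℝ

/-- The matrix `curl v` of a polynomial vector field, defined row-wise:
`(curl v)_{i1} = ∂₂ vᵢ`, `(curl v)_{i2} = -∂₁ vᵢ`. -/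
noncomputable def pcurl (v : Fin 2 → P2) : Matrix (Fin 2) (Fin 2) P2 :=
  Matrix.of fun i j =>
    if j = 0 then pderiv (1 : Fin 2) (v i) else -(pderiv (0 : Fin 2) (v i))

/-- `sym curl v := (curl v + (curl v)ᵀ)/2`. -/
noncomputable def psymCurl (v : Fin 2 → P2) : Matrix (Fin 2) (Fin 2) P2 :=
  (1 / 2 : ℝ) • (pcurl v + (pcurl v)ᵀ)

/-- `div div τ := Σ_{i,j} ∂ᵢ∂ⱼ τ_{ij}`. -/
noncomputable def pdivDiv (τ : Matrix (Fin 2) (Fin 2) P2) : P2 :=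
  ∑ i : Fin 2, ∑ j : Fin 2, pderiv i (pderiv j (τ i j))

/-- The matrix `x xᵀ q` with `(i,j)`-entry `Xᵢ · Xⱼ · q`. -/
noncomputable def xxT (q : P2) : Matrix (Fin 2) (Fin 2) P2 :=
  Matrix.of fun i j => X i * X j * q

/-- The polynomial vector `x^⊥ = (X₂, -X₁)`. -/
noncomputable def xPerp : Fin 2 → P2 := ![X 1, -X 0]

/-- `rot τ`, with components `(rot τ)ᵢ = ∂₁ τ_{i2} - ∂₂ τ_{i1}`. -/
noncomputable def prot (τ : Matrix (Fin 2) (Fin 2) P2) : Fin 2 → P2 :=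
  fun i => pderiv (0 : Fin 2) (τ i 1) - pderiv (1 : Fin 2) (τ i 0)

/-- The Hessian matrix `∇²q` with entries `∂ᵢ∂ⱼ q`. -/
noncomputable def phess (q : P2) : Matrix (Fin 2) (Fin 2) P2 :=
  Matrix.of fun i j => pderiv i (pderiv j q)

/-- `sym(x^⊥ ⊗ v)`, the symmetric matrix with `(i,j)`-entry
`((x^⊥)ᵢ vⱼ + vᵢ (x^⊥)ⱼ)/2`. -/
noncomputable def symTen (v : Fin 2 → P2) : Matrix (Fin 2) (Fin 2) P2 :=
  Matrix.of fun i j => (1 / 2 : ℝ) • (xPerp i * v j + v i * xPerp j)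

/-- The gradient matrix `∇v` with entries `(∇v)_{ij} = ∂ⱼ vᵢ`. -/
noncomputable def pgrad (v : Fin 2 → P2) : Matrix (Fin 2) (Fin 2) P2 :=
  Matrix.of fun i j => pderiv j (v i)

/-- The symmetric gradient `def v := (∇v + (∇v)ᵀ)/2`. -/
noncomputable def pdef (v : Fin 2 → P2) : Matrix (Fin 2) (Fin 2) P2 :=
  (1 / 2 : ℝ) • (pgrad v + (pgrad v)ᵀ)

/-- The matrix `x^⊥ (x^⊥)ᵀ q` with `(i,j)`-entry `(x^⊥)ᵢ (x^⊥)ⱼ q`. -/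
noncomputable def xPerpxPerpT (q : P2) : Matrix (Fin 2) (Fin 2) P2 :=
  Matrix.of fun i j => xPerp i * xPerp j * q

/-- `rot rot τ := ∂₁(rot τ)₂ − ∂₂(rot τ)₁`. -/
noncomputable def protRot (τ : Matrix (Fin 2) (Fin 2) P2) : P2 :=
  pderiv (0 : Fin 2) (prot τ 1) - pderiv (1 : Fin 2) (prot τ 0)

/-- quotient by X i -/
noncomputable def dX (i : Fin 2) (p : P2) : P2 := p.divMonomial (Finsupp.single i 1)
/-- remainder mod X i -/
noncomputable def mX (i : Fin 2) (p : P2) : P2 := p.modMonomial (Finsupp.single i 1)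

lemma coeff_dX (i : Fin 2) (p : P2) (d : Fin 2 →₀ ℕ) :
    coeff d (dX i p) = coeff (Finsupp.single i 1 + d) p :=
  coeff_divMonomial _ _ _

lemma coeff_mX (i : Fin 2) (p : P2) (d : Fin 2 →₀ ℕ) :
    coeff d (mX i p) = if d i = 0 then coeff d p else 0 := by
  by_cases h : d i = 0
  · rw [if_pos h]
    exact coeff_modMonomial_of_not_le _ (by
      rw [Finsupp.single_le_iff]; omega)
  · rw [if_neg h]
    exact coeff_modMonomial_of_le _ (by rw [Finsupp.single_le_iff]; omega)

lemma fin2_finsupp_eq_zero {d : Fin 2 →₀ ℕ} (h0 : d 0 = 0) (h1 : d 1 = 0) : d = 0 := by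
  ext a
  fin_cases a <;> simpa

lemma decompA (p : P2) :
    p = X 1 * dX 1 p + X 0 * dX 0 (mX 1 p) + C (coeff 0 p) := by
  have h1 : X 1 * dX 1 p + mX 1 p = p := divMonomial_add_modMonomial_single p 1
  have h2 : X 0 * dX 0 (mX 1 p) + mX 0 (mX 1 p) = mX 1 p :=
    divMonomial_add_modMonomial_single _ 0
  have h3 : mX 0 (mX 1 p) = C (coeff 0 p) := by
    apply MvPolynomial.ext
    intro d
    rw [coeff_mX, coeff_C]
    by_cases h0 : d 0 = 0
    · rw [if_pos h0, coeff_mX]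
      by_cases h1' : d 1 = 0
      · have : d = 0 := fin2_finsupp_eq_zero h0 h1'
        subst this; simp
      · rw [if_neg h1', if_neg]
        intro h; exact h1' (by rw [← h]; simp)
    · rw [if_neg h0, if_neg]
      intro h; exact h0 (by rw [← h]; simp)
  rw [h3] at h2
  rw [add_assoc, h2, h1]

lemma decompB (p : P2) :
    p = X 0 * dX 0 p + X 1 * dX 1 (mX 0 p) + C (coeff 0 p) := by
  have h1 : X 0 * dX 0 p + mX 0 p = p := divMonomial_add_modMonomial_single p 0
  have h2 : X 1 * dX 1 (mX 0 p) + mX 1 (mX 0 p) = mX 0 p :=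
    divMonomial_add_modMonomial_single _ 1
  have h3 : mX 1 (mX 0 p) = C (coeff 0 p) := by
    apply MvPolynomial.ext
    intro d
    rw [coeff_mX, coeff_C]
    by_cases h1' : d 1 = 0
    · rw [if_pos h1', coeff_mX]
      by_cases h0 : d 0 = 0
      · have : d = 0 := fin2_finsupp_eq_zero h0 h1'
        subst this; simp
      · rw [if_neg h0, if_neg]
        intro h; exact h0 (by rw [← h]; simp)
    · rw [if_neg h1', if_neg]
      intro h; exact h1' (by rw [← h]; simp)
  rw [h3] at h2
  rw [add_assoc, h2, h1]

lemma deg_mX (i : Fin 2) (p : P2) : (mX i p).totalDegree ≤ p.totalDegree := by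
  apply totalDegree_le_of_support_subset
  intro d hd
  rw [mem_support_iff] at hd ⊢
  rw [coeff_mX] at hd
  by_cases h : d i = 0
  · rwa [if_pos h] at hd
  · rw [if_neg h] at hd; exact absurd rfl hd

lemma deg_dX (i : Fin 2) (p : P2) (n : ℕ) (h : p.totalDegree ≤ n + 1) :
    (dX i p).totalDegree ≤ n := by
  rw [totalDegree]
  apply Finset.sup_le
  intro d hd
  rw [mem_support_iff, coeff_dX] at hd
  have hmem : (Finsupp.single i 1 + d) ∈ p.support := mem_support_iff.mpr hd
  have := le_totalDegree hmem
  have hsum : ((Finsupp.single i 1 + d).sum fun _ e => e) =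
      1 + (d.sum fun _ e => e) := by
    rw [Finsupp.sum_add_index (by simp) (by simp)]
    simp [Finsupp.sum_single_index]
  omega

lemma coeff_zero_pderiv (i : Fin 2) (p : P2) :
    coeff 0 (pderiv i p) = coeff (Finsupp.single i 1) p := by
  induction p using MvPolynomial.induction_on' with
  | add p q hp hq => rw [map_add, coeff_add, coeff_add, hp, hq]
  | monomial s c =>
    rw [pderiv_monomial, coeff_monomial, coeff_monomial]
    by_cases hs : s = Finsupp.single i 1
    · subst hs
      simp
    · rw [if_neg hs]
      by_cases h0 : s - Finsupp.single i 1 = 0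
      · rw [if_pos h0]
        have hsi : s i = 0 := by
          by_contra hne
          apply hs
          have hle : s i ≤ 1 := by
            have := DFunLike.congr_fun h0 i
            simp [Finsupp.tsub_apply] at this
            omega
          have hj : ∀ j, j ≠ i → s j = 0 := by
            intro j hj
            have := DFunLike.congr_fun h0 j
            simp [Finsupp.tsub_apply, Finsupp.single_apply, hj.symm] at this
            simpa [Finsupp.single_apply] using this
          ext j
          by_cases hji : j = i
          · subst hji; simp [Finsupp.single_apply]; omega
          · simp [Finsupp.single_apply, hj j hji, Ne.symm hji]
        simp [hsi]
      · rw [if_neg h0]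


lemma key (k : ℕ) (hk : 1 ≤ k) (w : Fin 2 → P2)
    (h0 : ∀ i, coeff 0 (w i) = 0)
    (hdiv : coeff (Finsupp.single 0 1) (w 0) + coeff (Finsupp.single 1 1) (w 1) = 0)
    (hdegw : ∀ i, (w i).totalDegree ≤ k + 1) :
    ∃ τ : Matrix (Fin 2) (Fin 2) P2, τᵀ = τ ∧ (∀ i j, (τ i j).totalDegree ≤ k) ∧
      (∀ i, w i = τ.mulVec xPerp i) := by
  set A : P2 := dX 1 (w 0) with hA
  set f : P2 := dX 0 (mX 1 (w 0)) with hf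
  set B : P2 := dX 0 (w 1) with hB
  set g : P2 := dX 1 (mX 0 (w 1)) with hg
  set f0 : ℝ := coeff 0 f with hf0
  set hh : P2 := dX 1 (g + C f0) with hhh
  set m : P2 := dX 0 (f - C f0) with hm
  -- basic coefficient identities
  have hcf0 : f0 = coeff (Finsupp.single 0 1) (w 0) := by
    rw [hf0, hf, coeff_dX, add_zero, coeff_mX]
    simp [Finsupp.single_apply]
  have hcg0 : coeff 0 g = coeff (Finsupp.single 1 1) (w 1) := by
    rw [hg, coeff_dX, add_zero, coeff_mX]
    simp [Finsupp.single_apply]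
  -- decompositions of w
  have hw0 : w 0 = X 1 * A + X 0 * f := by
    have := decompA (w 0)
    rwa [h0 0, map_zero, add_zero] at this
  have hw1 : w 1 = X 0 * B + X 1 * g := by
    have := decompB (w 1)
    rwa [h0 1, map_zero, add_zero] at this
  -- exact divisions
  have hq : X 1 * hh = g + C f0 := by
    have hd := decompA (g + C f0)
    have hc0 : coeff 0 (g + C f0) = 0 := by
      rw [coeff_add, coeff_C, if_pos rfl, hcg0, hcf0]
      linarith
    have hz : dX 0 (mX 1 (g + C f0)) = 0 := by
      apply MvPolynomial.ext
      intro d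
      rw [coeff_dX, coeff_mX, coeff_zero]
      by_cases hd1 : ((Finsupp.single (0 : Fin 2) 1 + d : Fin 2 →₀ ℕ)) 1 = 0
      · rw [if_pos hd1, coeff_add, coeff_C, hg, coeff_dX]
        rw [coeff_mX]
        have h00 : ((Finsupp.single (1 : Fin 2) 1 + (Finsupp.single (0 : Fin 2) 1 + d) : Fin 2 →₀ ℕ)) 0 ≠ 0 := by
          simp [Finsupp.single_apply]
        rw [if_neg h00, if_neg]
        · ring
        · intro hcon
          have := DFunLike.congr_fun hcon 0
          simp [Finsupp.single_apply] at this
          omega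
      · rw [if_neg hd1]
    rw [hc0, map_zero, add_zero, hz, mul_zero, add_zero] at hd
    rw [← hhh] at hd
    exact hd.symm
  have hmm : X 0 * m = f - C f0 := by
    have hd := decompB (f - C f0)
    have hc0 : coeff 0 (f - C f0) = 0 := by
      rw [coeff_sub, coeff_C, if_pos rfl, hf0]
      ring
    have hz : dX 1 (mX 0 (f - C f0)) = 0 := by
      apply MvPolynomial.ext
      intro d
      rw [coeff_dX, coeff_mX, coeff_zero]
      by_cases hd0 : ((Finsupp.single (1 : Fin 2) 1 + d : Fin 2 →₀ ℕ)) 0 = 0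
      · rw [if_pos hd0, coeff_sub, coeff_C, hf, coeff_dX]
        rw [coeff_mX]
        have h11 : ((Finsupp.single (0 : Fin 2) 1 + (Finsupp.single (1 : Fin 2) 1 + d) : Fin 2 →₀ ℕ)) 1 ≠ 0 := by
          simp [Finsupp.single_apply]
        rw [if_neg h11, if_neg]
        · ring
        · intro hcon
          have := DFunLike.congr_fun hcon 1
          simp [Finsupp.single_apply] at this
          omega
      · rw [if_neg hd0]
    rw [hc0, map_zero, add_zero, hz, mul_zero, add_zero] at hd
    rw [← hm] at hd
    exact hd.symm
  -- the matrix
  refine ⟨Matrix.of ![![A + X 0 * hh, -f + g + C f0], ![-f + g + C f0, -(X 1 * m) - B]],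
    ?_, ?_, ?_⟩
  · ext i j
    fin_cases i <;> fin_cases j <;> simp [Matrix.transpose_apply]
  · -- degree bounds
    have degA : A.totalDegree ≤ k := deg_dX _ _ _ (hdegw 0)
    have degB : B.totalDegree ≤ k := deg_dX _ _ _ (hdegw 1)
    have degf : f.totalDegree ≤ k := deg_dX _ _ _ ((deg_mX _ _).trans (hdegw 0))
    have degg : g.totalDegree ≤ k := deg_dX _ _ _ ((deg_mX _ _).trans (hdegw 1))
    have degq : (g + C f0).totalDegree ≤ (k - 1) + 1 := by
      refine (totalDegree_add _ _).trans ?_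
      rw [totalDegree_C]
      have : k = (k-1)+1 := by omega
      omega
    have degh : hh.totalDegree ≤ k - 1 := deg_dX _ _ _ degq
    have degq' : (f - C f0).totalDegree ≤ (k - 1) + 1 := by
      refine (totalDegree_sub _ _).trans ?_
      rw [totalDegree_C]
      omega
    have degm : m.totalDegree ≤ k - 1 := deg_dX _ _ _ degq'
    have degXh : (X 0 * hh).totalDegree ≤ k := by
      refine (totalDegree_mul _ _).trans ?_
      rw [totalDegree_X]
      omega
    have degXm : (X 1 * m).totalDegree ≤ k := by
      refine (totalDegree_mul _ _).trans ?_
      rw [totalDegree_X]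
      omega
    have degp12 : (-f + g + C f0).totalDegree ≤ k := by
      refine (totalDegree_add _ _).trans ?_
      rw [totalDegree_C]
      refine max_le (le_trans (totalDegree_add _ _) ?_) (by omega)
      rw [totalDegree_neg]
      exact max_le degf degg
    intro i j
    fin_cases i <;> fin_cases j <;> simp only [Matrix.of_apply, Matrix.cons_val',
      Matrix.cons_val_zero, Matrix.cons_val_one, Matrix.head_cons, Matrix.empty_val',
      Matrix.cons_val_fin_one, Matrix.head_fin_const]
    · exact (totalDegree_add _ _).trans (max_le degA degXh)
    · exact degp12
    · exact degp12
    · refine (totalDegree_sub _ _).trans (max_le ?_ degB)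
      rw [totalDegree_neg]
      exact degXm
  · rw [Fin.forall_fin_two]
    constructor
    · simp only [Matrix.mulVec, dotProduct, Fin.sum_univ_two, Matrix.of_apply,
        Matrix.cons_val', Matrix.cons_val_zero, Matrix.cons_val_one, Matrix.head_cons,
        Matrix.empty_val', Matrix.cons_val_fin_one, Matrix.head_fin_const, xPerp]
      linear_combination hw0 - (X 0 : P2) * hq
    · simp only [Matrix.mulVec, dotProduct, Fin.sum_univ_two, Matrix.of_apply,
        Matrix.cons_val', Matrix.cons_val_zero, Matrix.cons_val_one, Matrix.head_cons,
        Matrix.empty_val', Matrix.cons_val_fin_one, Matrix.head_fin_const, xPerp]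
      linear_combination hw1 - (X 1 : P2) * hmm

lemma coeff_zero_mul_X (p : P2) (j : Fin 2) : coeff 0 (p * X j) = 0 := by
  classical
  rw [coeff_mul_X']
  simp

lemma coeff_single_mul_X_self (p : P2) (j : Fin 2) :
    coeff (Finsupp.single j 1) (p * X j) = coeff 0 p := by
  classical
  rw [coeff_mul_X']
  simp

lemma coeff_single_mul_X_ne (p : P2) {i j : Fin 2} (h : j ≠ i) :
    coeff (Finsupp.single i 1) (p * X j) = 0 := by
  classical
  rw [coeff_mul_X']
  rw [if_neg]
  simp only [Finsupp.mem_support_iff, Finsupp.single_apply, ne_eq, not_not]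
  split
  · next hc => exact absurd hc.symm h
  · rfl

lemma single_ne_zero' (i : Fin 2) : Finsupp.single i 1 ≠ (0 : Fin 2 →₀ ℕ) := by
  intro hc
  have := DFunLike.congr_fun hc i
  simp at this

lemma coeff_single_C (c : ℝ) (i : Fin 2) :
    coeff (Finsupp.single i 1) (C c : P2) = 0 := by
  rw [coeff_C, if_neg]
  exact fun hc => single_ne_zero' i hc.symm

lemma eval_zero_eq_coeff (p : P2) : eval (0 : Fin 2 → ℝ) p = coeff 0 p := by
  rw [eval_zero]
  rfl

/-- Decomposition `v = τ x^⊥ + a + b x` of polynomial vector fields of degree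
≤ k+1, with `a = v(0,0)` and `b = ½ (div v)(0,0)` uniquely determined. -/
theorem stmt_11 (k : ℕ) (hk : 2 ≤ k) (v : Fin 2 → P2)
    (hdeg : ∀ i, (v i).totalDegree ≤ k + 1) :
    ∃ (τ : Matrix (Fin 2) (Fin 2) P2) (a : Fin 2 → ℝ) (b : ℝ),
      τᵀ = τ ∧ (∀ i j, (τ i j).totalDegree ≤ k) ∧
      (∀ i, v i = τ.mulVec xPerp i + C (a i) + C b * X i) ∧
      (∀ i, a i = eval (0 : Fin 2 → ℝ) (v i)) ∧
      b = (1 / 2) * eval (0 : Fin 2 → ℝ)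
        (pderiv (0 : Fin 2) (v 0) + pderiv (1 : Fin 2) (v 1)) ∧
      ∀ (τ' : Matrix (Fin 2) (Fin 2) P2) (a' : Fin 2 → ℝ) (b' : ℝ),
        τ'ᵀ = τ' → (∀ i j, (τ' i j).totalDegree ≤ k) →
        (∀ i, v i = τ'.mulVec xPerp i + C (a' i) + C b' * X i) →
        a' = a ∧ b' = b := by
  classical
  set a : Fin 2 → ℝ := fun i => eval (0 : Fin 2 → ℝ) (v i) with ha
  set b : ℝ := (1 / 2) * eval (0 : Fin 2 → ℝ)
      (pderiv (0 : Fin 2) (v 0) + pderiv (1 : Fin 2) (v 1)) with hb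
  set w : Fin 2 → P2 := fun i => v i - C (a i) - C b * X i with hwdef
  have hbsum : 2 * b = coeff (Finsupp.single 0 1) (v 0) + coeff (Finsupp.single 1 1) (v 1) := by
    rw [hb, eval_zero_eq_coeff, coeff_add, coeff_zero_pderiv, coeff_zero_pderiv]
    ring
  have h0 : ∀ i, coeff 0 (w i) = 0 := by
    intro i
    have hai : a i = coeff 0 (v i) := eval_zero_eq_coeff (v i)
    rw [hwdef]
    simp only [coeff_sub, coeff_C_mul, coeff_zero_X, mul_zero, coeff_C, eq_self_iff_true, if_true, hai]
    ring
  have hdiv : coeff (Finsupp.single 0 1) (w 0) + coeff (Finsupp.single 1 1) (w 1) = 0 := by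
    rw [hwdef]
    simp only [coeff_sub, coeff_C_mul, coeff_single_C, coeff_X, ↓reduceIte]
    linarith [hbsum]
  have hdegw : ∀ i, (w i).totalDegree ≤ k + 1 := by
    intro i
    rw [hwdef]
    refine (totalDegree_sub _ _).trans (max_le ((totalDegree_sub _ _).trans (max_le (hdeg i) ?_)) ?_)
    · rw [totalDegree_C]; omega
    · refine (totalDegree_mul _ _).trans ?_
      rw [totalDegree_C, totalDegree_X]
      omega
  obtain ⟨τ, hsym, hdegτ, heqw⟩ := key k (by omega) w h0 hdiv hdegw
  refine ⟨τ, a, b, hsym, hdegτ, ?_, fun i => rfl, rfl, ?_⟩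
  · intro i
    have h := heqw i
    rw [hwdef] at h
    linear_combination h
  · intro τ' a' b' hsym' hdeg' heq'
    have hsymval : τ' 1 0 = τ' 0 1 := by
      conv_rhs => rw [← hsym']
      rfl
    have hz : ∀ i, coeff 0 (τ'.mulVec xPerp i) = 0 := by
      intro i
      simp only [Matrix.mulVec, dotProduct, Fin.sum_univ_two, xPerp,
        Matrix.cons_val_zero, Matrix.cons_val_one, Matrix.head_cons]
      rw [coeff_add, mul_neg, coeff_neg, coeff_zero_mul_X, coeff_zero_mul_X]
      ring
    have ha' : ∀ i, a' i = coeff 0 (v i) := by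
      intro i
      have h := congrArg (coeff 0) (heq' i)
      rw [coeff_add, coeff_add, coeff_C, if_pos rfl, coeff_C_mul, coeff_zero_X,
        mul_zero, add_zero, hz i, zero_add] at h
      exact h.symm
    constructor
    · funext i
      rw [ha' i]
      exact (eval_zero_eq_coeff (v i)).symm
    · have e0 := congrArg (coeff (Finsupp.single (0 : Fin 2) 1)) (heq' 0)
      have e1 := congrArg (coeff (Finsupp.single (1 : Fin 2) 1)) (heq' 1)
      have h01 : coeff (Finsupp.single (0 : Fin 2) 1) (τ' 0 0 * X 1) = 0 :=
        coeff_single_mul_X_ne _ (by decide)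
      have h10 : coeff (Finsupp.single (1 : Fin 2) 1) (τ' 1 1 * X 0) = 0 :=
        coeff_single_mul_X_ne _ (by decide)
      simp only [Matrix.mulVec, dotProduct, Fin.sum_univ_two, xPerp,
        Matrix.cons_val_zero, Matrix.cons_val_one, Matrix.head_cons,
        coeff_add, coeff_C_mul, mul_neg, coeff_neg, coeff_X, coeff_single_C,
        coeff_single_mul_X_self, h01, h10, ↓reduceIte] at e0 e1
      rw [hsymval] at e1
      linarith [hbsum, e0, e1]
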